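/- Let (X_N) be real random variables and let W_N = (1/ξ_N) Σ_{i=1}^{ξ_N} 1_{U_i ≤ X_N}, where the U_i are i.i.d. uniform on [0,1] independent of X_N and ξ_N → ∞ in probability. If the limits F̄(a) = limsup_N P(X_N ≤ a) and F̲(a) = liminf_N P(X_N ≤ a) satisfy appropriate continuity, and lim_N P(W_N ≤ a) exists at all continuity points a, then lim_N P(X_N ≤ a) = lim_N P(W_N ≤ a) at all points a of continuity of the latter. In particular, X_N converges in distribution if and only if W_N does, and then to the same limit. -/

import Mathlib

open MeasureTheory ProbabilityTheory Filter

/-- Conditional law of large numbers / de Finetti-type identification: let `X_N` take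
values in `[0,1]`, let `(U_i)` be i.i.d. uniform on `[0,1]`, independent of `(X_N, ξ_N)`,
let `ξ_N → ∞` in probability, and let
`W_N = ξ_N⁻¹ ∑_{i=1}^{ξ_N} 1_{U_i ≤ X_N}` be the empirical frequency. If
`lim_N P(W_N ≤ a)` exists and equals `G a` at all continuity points `a` of a monotone
function `G`, then also `lim_N P(X_N ≤ a) = G a` at all such points, i.e. the empirical
frequencies converge in distribution iff the parameters do, and to the same limit. -/
lemma aux_mean_mem (n : ℕ) (f : ℕ → ℝ) (hf : ∀ i, f i = 0 ∨ f i = 1) :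
    (n:ℝ)⁻¹ * ∑ i ∈ Finset.range n, f i ∈ Set.Icc (0:ℝ) 1 := by
  rcases Nat.eq_zero_or_pos n with h | h
  · subst h; simp
  have h0 : (0:ℝ) ≤ ∑ i ∈ Finset.range n, f i :=
    Finset.sum_nonneg fun i _ => by rcases hf i with h | h <;> simp [h]
  have h1 : ∑ i ∈ Finset.range n, f i ≤ (n:ℝ) := by
    calc ∑ i ∈ Finset.range n, f i ≤ ∑ i ∈ Finset.range n, 1 :=
          Finset.sum_le_sum fun i _ => by rcases hf i with h | h <;> simp [h]
      _ = (n:ℝ) := by simp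
  have hn : (0:ℝ) < n := by exact_mod_cast h
  constructor
  · positivity
  · rw [inv_mul_le_iff₀ hn]; simpa using h1

lemma aux_var {Ω : Type*} [MeasureSpace Ω] [IsProbabilityMeasure (ℙ : Measure Ω)]
    (U : ℕ → Ω → ℝ) (hUmeas : ∀ i, Measurable (U i))
    (hUiid : iIndepFun U ℙ)
    (hUdist : ∀ i, Measure.map (U i) ℙ = volume.restrict (Set.Icc (0:ℝ) 1))
    {x : ℝ} (hx : x ∈ Set.Icc (0:ℝ) 1) {n : ℕ} (hn : 1 ≤ n) :
    ∫ ω, ((n:ℝ)⁻¹ * ∑ i ∈ Finset.range n, (if U i ω ≤ x then (1:ℝ) else 0) - x)^2 ∂ℙ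
      = x*(1-x)/n := by
  set φ : ℝ → ℝ := fun t => (if t ≤ x then (1:ℝ) else 0) - x with hφ
  have hφm : Measurable φ := by
    apply Measurable.sub _ measurable_const
    exact Measurable.ite measurableSet_Iic measurable_const measurable_const
  set Y : ℕ → Ω → ℝ := fun i ω => φ (U i ω) with hY
  have hYm : ∀ i, Measurable (Y i) := fun i => hφm.comp (hUmeas i)
  have hYbdd : ∀ i ω, |Y i ω| ≤ 1 := by
    intro i ω
    simp only [hY, hφ]
    by_cases h : U i ω ≤ x
    · rw [if_pos h, abs_of_nonneg (by linarith [hx.2])]; linarith [hx.1]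
    · rw [if_neg h]; rw [abs_of_nonpos (by linarith [hx.1])]; linarith [hx.2]
  -- probability of the indicator event
  have hprob : ∀ i, ℙ {ω | U i ω ≤ x} = ENNReal.ofReal x := by
    intro i
    have h1 : {ω | U i ω ≤ x} = U i ⁻¹' Set.Iic x := rfl
    rw [h1, ← Measure.map_apply (hUmeas i) measurableSet_Iic, hUdist i,
      Measure.restrict_apply measurableSet_Iic]
    have h2 : Set.Iic x ∩ Set.Icc 0 1 = Set.Icc 0 x := by
      ext y
      simp only [Set.mem_inter_iff, Set.mem_Iic, Set.mem_Icc]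
      exact ⟨fun ⟨h1, h2, h3⟩ => ⟨h2, h1⟩, fun ⟨h1, h2⟩ => ⟨h2, h1, h2.trans hx.2⟩⟩
    rw [h2, Real.volume_Icc]; norm_num
  -- integral of the indicator
  have hIndInt : ∀ i, Integrable (fun ω => if U i ω ≤ x then (1:ℝ) else 0) ℙ := by
    intro i
    have : (fun ω => if U i ω ≤ x then (1:ℝ) else 0)
        = Set.indicator {ω | U i ω ≤ x} (fun _ => (1:ℝ)) := by
      ext ω; simp [Set.indicator_apply]
    rw [this]
    exact (integrable_const 1).indicator (measurableSet_le (hUmeas i) measurable_const)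
  have hIndVal : ∀ i, ∫ ω, (if U i ω ≤ x then (1:ℝ) else 0) ∂ℙ = x := by
    intro i
    have h1 : (fun ω => if U i ω ≤ x then (1:ℝ) else 0)
        = Set.indicator {ω | U i ω ≤ x} (fun _ => (1:ℝ)) := by
      ext ω; simp [Set.indicator_apply]
    rw [h1, integral_indicator_const _ (measurableSet_le (hUmeas i) measurable_const),
      measureReal_def, hprob i, smul_eq_mul, mul_one, ENNReal.toReal_ofReal hx.1]
  have hYint : ∀ i, Integrable (Y i) ℙ := fun i => (hIndInt i).sub (integrable_const x)
  have hYmean : ∀ i, ∫ ω, Y i ω ∂ℙ = 0 := by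
    intro i
    simp only [hY, hφ]
    rw [integral_sub (hIndInt i) (integrable_const x), hIndVal i, integral_const]
    simp
  have hYsq : ∀ i, ∫ ω, Y i ω * Y i ω ∂ℙ = x*(1-x) := by
    intro i
    have h1 : ∀ ω, Y i ω * Y i ω = (if U i ω ≤ x then (1:ℝ) else 0) * (1 - 2*x) + x^2 := by
      intro ω
      simp only [hY, hφ]
      by_cases h : U i ω ≤ x <;> simp [h] <;> try ring
    simp only [h1]
    rw [integral_add ((hIndInt i).mul_const _) (integrable_const _),
      integral_mul_const, hIndVal i, integral_const]
    simp; try ring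
  have hYprodInt : ∀ i j, Integrable (fun ω => Y i ω * Y j ω) ℙ := by
    intro i j
    refine Integrable.mono' (integrable_const 1) ((hYm i).mul (hYm j)).aestronglyMeasurable ?_
    filter_upwards with ω
    rw [Real.norm_eq_abs, abs_mul]
    nlinarith [hYbdd i ω, hYbdd j ω, abs_nonneg (Y i ω), abs_nonneg (Y j ω)]
  have hcross : ∀ i j, i ≠ j → ∫ ω, Y i ω * Y j ω ∂ℙ = 0 := by
    intro i j hij
    have hind : IndepFun (Y i) (Y j) ℙ := (hUiid.indepFun hij).comp hφm hφm
    have := hind.integral_mul_eq_mul_integral (hYint i).aestronglyMeasurable (hYint j).aestronglyMeasurable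
    simp only [Pi.mul_apply] at this
    rw [this, hYmean i, hYmean j, mul_zero]
  -- rewrite the integrand
  have hkey : ∀ ω, ((n:ℝ)⁻¹ * ∑ i ∈ Finset.range n, (if U i ω ≤ x then (1:ℝ) else 0) - x)^2
      = ((n:ℝ)⁻¹)^2 * ∑ i ∈ Finset.range n, ∑ j ∈ Finset.range n, Y i ω * Y j ω := by
    intro ω
    have hn0 : (n:ℝ) ≠ 0 := Nat.cast_ne_zero.mpr (Nat.one_le_iff_ne_zero.mp hn)
    have h1 : (n:ℝ)⁻¹ * ∑ i ∈ Finset.range n, (if U i ω ≤ x then (1:ℝ) else 0) - x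
        = (n:ℝ)⁻¹ * ∑ i ∈ Finset.range n, Y i ω := by
      simp only [hY, hφ, Finset.sum_sub_distrib, Finset.sum_const, Finset.card_range,
        nsmul_eq_mul]
      field_simp
    rw [h1, mul_pow]
    congr 1
    rw [sq, Finset.sum_mul_sum]
  calc ∫ ω, ((n:ℝ)⁻¹ * ∑ i ∈ Finset.range n, (if U i ω ≤ x then (1:ℝ) else 0) - x)^2 ∂ℙ
      = ∫ ω, ((n:ℝ)⁻¹)^2 * ∑ i ∈ Finset.range n, ∑ j ∈ Finset.range n, Y i ω * Y j ω ∂ℙ := by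
        exact integral_congr_ae (Filter.Eventually.of_forall fun ω => hkey ω)
    _ = ((n:ℝ)⁻¹)^2 * ∑ i ∈ Finset.range n, ∑ j ∈ Finset.range n, ∫ ω, Y i ω * Y j ω ∂ℙ := by
        rw [integral_const_mul]
        congr 1
        rw [integral_finset_sum _ fun i _ => integrable_finset_sum _ fun j _ => hYprodInt i j]
        exact Finset.sum_congr rfl fun i _ => integral_finset_sum _ fun j _ => hYprodInt i j
    _ = ((n:ℝ)⁻¹)^2 * ∑ i ∈ Finset.range n, x*(1-x) := by
        congr 1
        refine Finset.sum_congr rfl fun i hi => ?_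
        rw [Finset.sum_eq_single i (fun j _ hj => hcross i j (Ne.symm hj)) (fun h => absurd hi h),
          hYsq i]
    _ = x*(1-x)/n := by
        rw [Finset.sum_const, Finset.card_range, nsmul_eq_mul]
        have hn0 : (n:ℝ) ≠ 0 := by
          simpa using Nat.one_le_iff_ne_zero.mp hn
        field_simp

lemma aux_meas_nat {α : Type*} [MeasurableSpace α] (g : ℕ → α → ℝ)
    (hg : ∀ n, Measurable (g n)) (f : α → ℕ) (hf : Measurable f) :
    Measurable fun a => g (f a) a := by
  have h1 : (fun a => g (f a) a) = fun a => (fun p : α × ℕ => g p.2 p.1) (a, f a) := rfl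
  rw [h1]
  exact (measurable_from_prod_countable_left (f := fun p : α × ℕ => g p.2 p.1)
    (fun n => hg n)).comp (measurable_id.prodMk hf)

lemma aux_second_moment {Ω : Type*} [MeasureSpace Ω] [IsProbabilityMeasure (ℙ : Measure Ω)]
    (X : Ω → ℝ) (hXmeas : Measurable X) (hX01 : ∀ ω, X ω ∈ Set.Icc (0 : ℝ) 1)
    (U : ℕ → Ω → ℝ) (hUmeas : ∀ i, Measurable (U i))
    (hUiid : iIndepFun U ℙ)
    (hUdist : ∀ i, Measure.map (U i) ℙ = volume.restrict (Set.Icc (0 : ℝ) 1))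
    (ξ : Ω → ℕ) (hξmeas : Measurable ξ)
    (hindep : IndepFun (fun ω => (X ω, ξ ω)) (fun ω (i : ℕ) => U i ω) ℙ)
    (C : ℕ) (hC : 1 ≤ C) :
    ∫ ω, (if C ≤ ξ ω then (1:ℝ) else 0) *
        ((ξ ω : ℝ)⁻¹ * ∑ i ∈ Finset.range (ξ ω), (if U i ω ≤ X ω then (1:ℝ) else 0) - X ω)^2 ∂ℙ
      ≤ 1/(4*C) := by
  classical
  set Φ : (ℝ × ℕ) × (ℕ → ℝ) → ℝ := fun p => (if C ≤ p.1.2 then (1:ℝ) else 0) *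
    ((p.1.2:ℝ)⁻¹ * ∑ i ∈ Finset.range p.1.2, (if p.2 i ≤ p.1.1 then (1:ℝ) else 0) - p.1.1)^2
    with hΦ
  -- measurability of Φ
  have hΨm : ∀ n : ℕ, Measurable (fun q : ℝ × (ℕ → ℝ) => (if C ≤ n then (1:ℝ) else 0) *
      ((n:ℝ)⁻¹ * ∑ i ∈ Finset.range n, (if q.2 i ≤ q.1 then (1:ℝ) else 0) - q.1)^2) := by
    intro n
    apply Measurable.mul measurable_const
    apply Measurable.pow _ measurable_const
    apply Measurable.sub _ measurable_fst
    apply Measurable.mul measurable_const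
    apply Finset.measurable_sum
    intro i _
    exact Measurable.ite
      (measurableSet_le (measurable_snd.eval) measurable_fst)
      measurable_const measurable_const
  have hΦm : Measurable Φ := by
    exact aux_meas_nat
      (fun n (p : (ℝ × ℕ) × (ℕ → ℝ)) => (if C ≤ n then (1:ℝ) else 0) *
        ((n:ℝ)⁻¹ * ∑ i ∈ Finset.range n, (if p.2 i ≤ p.1.1 then (1:ℝ) else 0) - p.1.1)^2)
      (fun n => by
        apply Measurable.mul measurable_const
        apply Measurable.pow _ measurable_const
        apply Measurable.sub _ (measurable_fst.comp measurable_fst)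
        apply Measurable.mul measurable_const
        apply Finset.measurable_sum
        intro i _
        exact Measurable.ite
          (measurableSet_le measurable_snd.eval (measurable_fst.comp measurable_fst))
          measurable_const measurable_const)
      (fun p => p.1.2) (measurable_snd.comp measurable_fst)
  have hpairm : Measurable (fun ω => (X ω, ξ ω)) := hXmeas.prodMk hξmeas
  have hUm : Measurable (fun ω (i : ℕ) => U i ω) := measurable_pi_lambda _ hUmeas
  set ν : Measure (ℝ × ℕ) := Measure.map (fun ω => (X ω, ξ ω)) ℙ with hν
  set μU : Measure (ℕ → ℝ) := Measure.map (fun ω (i : ℕ) => U i ω) ℙ with hμU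
  have hνprob : IsProbabilityMeasure ν := Measure.isProbabilityMeasure_map hpairm.aemeasurable
  have hμUprob : IsProbabilityMeasure μU := Measure.isProbabilityMeasure_map hUm.aemeasurable
  -- the law of the pair is the product law
  have hprod : Measure.map (fun ω => ((X ω, ξ ω), fun i => U i ω)) ℙ = ν.prod μU :=
    (indepFun_iff_map_prod_eq_prod_map_map hpairm.aemeasurable hUm.aemeasurable).mp hindep
  -- a.e. the first coordinate is in [0,1]
  have hbadν : ν {z : ℝ × ℕ | z.1 ∉ Set.Icc (0:ℝ) 1} = 0 := by
    have hset : {z : ℝ × ℕ | z.1 ∉ Set.Icc (0:ℝ) 1}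
        = Prod.fst ⁻¹' (Set.Icc (0:ℝ) 1)ᶜ := rfl
    rw [hν, hset, Measure.map_apply hpairm (measurable_fst (measurableSet_Icc.compl))]
    convert measure_empty (μ := (ℙ : Measure Ω))
    ext ω; simp [hX01 ω]
  have haeν : ∀ᵐ z ∂ν, z.1 ∈ Set.Icc (0:ℝ) 1 := by
    rw [ae_iff]; exact hbadν
  have haeprod : ∀ᵐ p ∂(ν.prod μU), p.1.1 ∈ Set.Icc (0:ℝ) 1 := by
    rw [ae_iff]
    have : {p : (ℝ × ℕ) × (ℕ → ℝ) | ¬ p.1.1 ∈ Set.Icc (0:ℝ) 1}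
        = {z : ℝ × ℕ | z.1 ∉ Set.Icc (0:ℝ) 1} ×ˢ Set.univ := by
      ext p; simp [Set.mem_prod]
    rw [this, Measure.prod_prod, hbadν, zero_mul]
  -- pointwise bound on Φ when x ∈ [0,1]
  have hΦbdd : ∀ p : (ℝ × ℕ) × (ℕ → ℝ), p.1.1 ∈ Set.Icc (0:ℝ) 1 → ‖Φ p‖ ≤ 1 := by
    rintro ⟨⟨x, n⟩, u⟩ hx
    have hmean := aux_mean_mem n (fun i => if u i ≤ x then (1:ℝ) else 0)
      (fun i => by by_cases h : u i ≤ x <;> simp [h])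
    simp only [hΦ, Real.norm_eq_abs]
    rw [abs_mul, abs_of_nonneg (by positivity : (0:ℝ) ≤ ((n:ℝ)⁻¹ * ∑ i ∈ Finset.range n,
      (if u i ≤ x then (1:ℝ) else 0) - x)^2)]
    have h1 : |(n:ℝ)⁻¹ * ∑ i ∈ Finset.range n, (if u i ≤ x then (1:ℝ) else 0) - x| ≤ 1 := by
      rw [abs_le]
      constructor <;> [nlinarith [hmean.1, hmean.2, hx.1, hx.2];
        nlinarith [hmean.1, hmean.2, hx.1, hx.2]]
    have h2 : ((n:ℝ)⁻¹ * ∑ i ∈ Finset.range n, (if u i ≤ x then (1:ℝ) else 0) - x)^2 ≤ 1 := by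
      have := abs_le.mp h1
      nlinarith [this.1, this.2]
    by_cases h : C ≤ n
    · rw [if_pos h, abs_one, one_mul]; exact h2
    · rw [if_neg h, abs_zero, zero_mul]
      positivity
  have hΦint : Integrable Φ (ν.prod μU) := by
    refine Integrable.mono' (integrable_const 1) hΦm.aestronglyMeasurable ?_
    filter_upwards [haeprod] with p hp using hΦbdd p hp
  -- the good bound function
  set h : ℝ × ℕ → ℝ := fun z => if C ≤ z.2 then z.1*(1-z.1)/z.2 else 0 with hh
  have hhm : Measurable h := by
    exact aux_meas_nat (fun n (z : ℝ × ℕ) => if C ≤ n then z.1*(1-z.1)/n else 0)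
      (fun n => by
        by_cases hCn : C ≤ n <;> simp only [hCn, if_true, if_false] <;> fun_prop)
      (fun z => z.2) measurable_snd
  have hhbdd : ∀ z : ℝ × ℕ, z.1 ∈ Set.Icc (0:ℝ) 1 → ‖h z‖ ≤ 1/(4*C) ∧ h z ≤ 1/(4*C) := by
    rintro ⟨x, n⟩ hx
    have hC0 : (0:ℝ) < C := by exact_mod_cast hC
    simp only [hh, Real.norm_eq_abs]
    by_cases hCn : C ≤ n
    · have hn0 : (0:ℝ) < n := by
        have : (C:ℝ) ≤ n := by exact_mod_cast hCn
        linarith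
      have hCn' : (C:ℝ) ≤ n := by exact_mod_cast hCn
      have hnum : 0 ≤ x*(1-x) := mul_nonneg hx.1 (by linarith [hx.2])
      have hnum2 : x*(1-x) ≤ 1/4 := by nlinarith [sq_nonneg (x - 1/2)]
      have hle : x*(1-x)/n ≤ 1/(4*C) := by
        rw [div_le_div_iff₀ hn0 (by positivity)]
        nlinarith
      have hge : 0 ≤ x*(1-x)/n := by positivity
      rw [if_pos hCn, abs_of_nonneg hge]
      exact ⟨hle, hle⟩
    · have hpos : (0:ℝ) ≤ 1/(4*(C:ℝ)) := by positivity
      rw [if_neg hCn, abs_zero]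
      exact ⟨hpos, hpos⟩
  have hhint : Integrable h ν := by
    refine Integrable.mono' (integrable_const (1/(4*(C:ℝ)))) hhm.aestronglyMeasurable ?_
    filter_upwards [haeν] with z hz using (hhbdd z hz).1
  -- the inner integral equals h a.e.
  have hinner : (fun z : ℝ × ℕ => ∫ u, Φ (z, u) ∂μU) =ᵐ[ν] h := by
    filter_upwards [haeν] with z hz
    obtain ⟨x, n⟩ := z
    by_cases hCn : C ≤ n
    · have hn1 : 1 ≤ n := hC.trans hCn
      have hinm : Measurable (fun u : ℕ → ℝ =>
          ((n:ℝ)⁻¹ * ∑ i ∈ Finset.range n, (if u i ≤ x then (1:ℝ) else 0) - x)^2) := by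
        apply Measurable.pow _ measurable_const
        apply Measurable.sub _ measurable_const
        apply Measurable.mul measurable_const
        apply Finset.measurable_sum
        intro i _
        exact Measurable.ite (measurableSet_le (measurable_pi_apply i) measurable_const)
          measurable_const measurable_const
      have h1 : ∀ u : ℕ → ℝ, Φ ((x, n), u)
          = ((n:ℝ)⁻¹ * ∑ i ∈ Finset.range n, (if u i ≤ x then (1:ℝ) else 0) - x)^2 := by
        intro u; simp only [hΦ, if_pos hCn, one_mul]
      simp only [h1]
      rw [hμU, integral_map hUm.aemeasurable hinm.aestronglyMeasurable]
      rw [aux_var U hUmeas hUiid hUdist hz hn1]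
      simp only [hh, if_pos hCn]
    · have h1 : ∀ u : ℕ → ℝ, Φ ((x, n), u) = 0 := by
        intro u; simp only [hΦ, if_neg hCn, zero_mul]
      simp only [h1, integral_zero]
      simp only [hh, if_neg hCn]
  -- put it together
  have hLHS : ∫ ω, (if C ≤ ξ ω then (1:ℝ) else 0) *
      ((ξ ω : ℝ)⁻¹ * ∑ i ∈ Finset.range (ξ ω), (if U i ω ≤ X ω then (1:ℝ) else 0) - X ω)^2 ∂ℙ
      = ∫ p, Φ p ∂(ν.prod μU) := by
    rw [← hprod, integral_map (hpairm.prodMk hUm).aemeasurable hΦm.aestronglyMeasurable]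
  rw [hLHS, integral_prod Φ hΦint, integral_congr_ae hinner]
  calc ∫ z, h z ∂ν ≤ ∫ _, 1/(4*(C:ℝ)) ∂ν := by
        refine integral_mono_ae hhint (integrable_const _) ?_
        filter_upwards [haeν] with z hz using (hhbdd z hz).2
    _ = 1/(4*C) := by simp

lemma aux_union {Ω : Type*} [MeasurableSpace Ω] (μ : Measure Ω) [IsFiniteMeasure μ]
    {A B C : Set Ω} (h : A ⊆ B ∪ C) : (μ A).toReal ≤ (μ B).toReal + (μ C).toReal := by
  have h1 : μ A ≤ μ B + μ C := (measure_mono h).trans (measure_union_le _ _)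
  have h2 := ENNReal.toReal_mono
    (ENNReal.add_ne_top.mpr ⟨measure_ne_top _ _, measure_ne_top _ _⟩) h1
  rwa [ENNReal.toReal_add (measure_ne_top _ _) (measure_ne_top _ _)] at h2

theorem empirical_frequency_same_limit
    {Ω : Type*} [MeasureSpace Ω] [IsProbabilityMeasure (ℙ : Measure Ω)]
    (X : ℕ → Ω → ℝ) (hXmeas : ∀ N, Measurable (X N))
    (hX01 : ∀ N ω, X N ω ∈ Set.Icc (0 : ℝ) 1)
    (U : ℕ → Ω → ℝ) (hUmeas : ∀ i, Measurable (U i))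
    (hUiid : iIndepFun U ℙ)
    (hUdist : ∀ i, Measure.map (U i) ℙ = volume.restrict (Set.Icc (0 : ℝ) 1))
    (ξ : ℕ → Ω → ℕ) (hξmeas : ∀ N, Measurable (ξ N))
    (hξ : ∀ C : ℕ, Tendsto (fun N => ℙ {ω | ξ N ω < C}) atTop (nhds 0))
    (hindep : ∀ N, IndepFun (fun ω => (X N ω, ξ N ω)) (fun ω (i : ℕ) => U i ω) ℙ)
    (W : ℕ → Ω → ℝ)
    (hW : ∀ N ω, W N ω = (ξ N ω : ℝ)⁻¹ *
      ∑ i ∈ Finset.range (ξ N ω), (if U i ω ≤ X N ω then (1 : ℝ) else 0))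
    (G : ℝ → ℝ) (hGmono : Monotone G)
    (hWlim : ∀ a : ℝ, ContinuousAt G a →
      Tendsto (fun N => (ℙ {ω | W N ω ≤ a}).toReal) atTop (nhds (G a))) :
    ∀ a : ℝ, ContinuousAt G a →
      Tendsto (fun N => (ℙ {ω | X N ω ≤ a}).toReal) atTop (nhds (G a)) := by
  classical
  -- measurability of W
  have hWmeas : ∀ N, Measurable (W N) := by
    intro N
    have h1 : W N = fun ω => (fun (n : ℕ) (ω : Ω) => (n : ℝ)⁻¹ *
        ∑ i ∈ Finset.range n, (if U i ω ≤ X N ω then (1:ℝ) else 0)) (ξ N ω) ω := by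
      funext ω; rw [hW]
    rw [h1]
    exact aux_meas_nat
      (fun (n : ℕ) (ω : Ω) => (n : ℝ)⁻¹ *
        ∑ i ∈ Finset.range n, (if U i ω ≤ X N ω then (1:ℝ) else 0))
      (fun n => by
        apply Measurable.mul measurable_const
        apply Finset.measurable_sum
        intro i _
        exact Measurable.ite (measurableSet_le (hUmeas i) (hXmeas N))
          measurable_const measurable_const)
      (ξ N) (hξmeas N)
  -- W takes values in [0,1]
  have hW01 : ∀ N ω, W N ω ∈ Set.Icc (0:ℝ) 1 := by
    intro N ω
    rw [hW]
    exact aux_mean_mem _ _ (fun i => by by_cases h : U i ω ≤ X N ω <;> simp [h])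
  -- Step A : W - X → 0 in probability
  have stepA : ∀ ε : ℝ, 0 < ε → ∀ δ : ℝ, 0 < δ →
      ∀ᶠ N in atTop, (ℙ {ω | ε < |W N ω - X N ω|}).toReal < δ := by
    intro ε hε δ hδ
    set C : ℕ := ⌈1/(2*δ*ε^2)⌉₊ + 1 with hCdef
    have hC1 : 1 ≤ C := Nat.succ_le_succ (Nat.zero_le _)
    have hC0 : (0:ℝ) < C := by exact_mod_cast hC1
    have hCgt : 1/(2*δ*ε^2) < (C:ℝ) := by
      have h1 : (1/(2*δ*ε^2) : ℝ) ≤ ⌈1/(2*δ*ε^2)⌉₊ := Nat.le_ceil _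
      have h2 : ((⌈1/(2*δ*ε^2)⌉₊ : ℝ)) < C := by
        rw [hCdef]; push_cast; linarith
      linarith
    have hprodgt : 1 < 2*δ*ε^2*C := by
      rw [div_lt_iff₀ (by positivity)] at hCgt
      linarith
    -- per-N Chebyshev bound
    have cheb : ∀ N, (ℙ {ω | ε < |W N ω - X N ω| ∧ C ≤ ξ N ω}).toReal < δ/2 := by
      intro N
      set E : Set Ω := {ω | ε < |W N ω - X N ω| ∧ C ≤ ξ N ω} with hE
      have hEmeas : MeasurableSet E := by
        have h1 : E = {ω | ε < |W N ω - X N ω|} ∩ {ω | C ≤ ξ N ω} := rfl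
        rw [h1]
        exact (measurableSet_lt measurable_const ((hWmeas N).sub (hXmeas N)).abs).inter
          (measurableSet_le measurable_const (hξmeas N))
      set R : Ω → ℝ := fun ω => (if C ≤ ξ N ω then (1:ℝ) else 0) * (W N ω - X N ω)^2 with hR
      have hRmeas : Measurable R := by
        exact ((Measurable.ite (measurableSet_le measurable_const (hξmeas N))
          measurable_const measurable_const).mul
          (((hWmeas N).sub (hXmeas N)).pow measurable_const))
      have hRbdd : ∀ ω, ‖R ω‖ ≤ 1 := by
        intro ω
        have h1 := hW01 N ω
        have h2 := hX01 N ω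
        have h3 : (W N ω - X N ω)^2 ≤ 1 := by nlinarith [h1.1, h1.2, h2.1, h2.2]
        have h4 : (0:ℝ) ≤ (W N ω - X N ω)^2 := sq_nonneg _
        simp only [hR, Real.norm_eq_abs]
        by_cases h : C ≤ ξ N ω
        · rw [if_pos h, one_mul, abs_of_nonneg h4]; exact h3
        · rw [if_neg h, zero_mul, abs_zero]; norm_num
      have hRint : Integrable R ℙ :=
        Integrable.mono' (integrable_const 1) hRmeas.aestronglyMeasurable
          (Filter.Eventually.of_forall hRbdd)
      have hpt : ∀ ω, Set.indicator E (fun _ => ε^2) ω ≤ R ω := by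
        intro ω
        rw [Set.indicator_apply]
        by_cases h : ω ∈ E
        · rw [if_pos h]
          obtain ⟨h1, h2⟩ := h
          simp only [hR]
          rw [if_pos h2, one_mul]
          calc ε^2 ≤ |W N ω - X N ω|^2 := by
                apply pow_le_pow_left₀ (le_of_lt hε) (le_of_lt h1)
            _ = (W N ω - X N ω)^2 := sq_abs _
        · rw [if_neg h]
          exact mul_nonneg (by positivity) (sq_nonneg _)
      have hint1 : ∫ ω, Set.indicator E (fun _ => ε^2) ω ∂ℙ = (ℙ E).toReal * ε^2 := by
        rw [integral_indicator_const _ hEmeas, smul_eq_mul, measureReal_def]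
      have hmono := integral_mono ((integrable_const (ε^2)).indicator hEmeas) hRint hpt
      rw [hint1] at hmono
      have hRval : ∫ ω, R ω ∂ℙ ≤ 1/(4*C) := by
        have h1 : ∫ ω, R ω ∂ℙ = ∫ ω, (if C ≤ ξ N ω then (1:ℝ) else 0) *
            ((ξ N ω : ℝ)⁻¹ * ∑ i ∈ Finset.range (ξ N ω),
              (if U i ω ≤ X N ω then (1:ℝ) else 0) - X N ω)^2 ∂ℙ := by
          apply integral_congr_ae
          filter_upwards with ω
          simp only [hR]
          rw [hW]
        rw [h1]
        exact aux_second_moment (X N) (hXmeas N) (hX01 N) U hUmeas hUiid hUdist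
          (ξ N) (hξmeas N) (hindep N) C hC1
      have hcheb : (ℙ E).toReal * ε^2 ≤ 1/(4*C) := le_trans hmono hRval
      have hPnn : (0:ℝ) ≤ (ℙ E).toReal := ENNReal.toReal_nonneg
      by_contra hcon
      push_neg at hcon
      have h5 : δ/2 * ε^2 ≤ 1/(4*(C:ℝ)) := by nlinarith [hcheb, pow_pos hε 2]
      rw [le_div_iff₀ (by positivity : (0:ℝ) < 4*(C:ℝ))] at h5
      linarith [hprodgt]
    -- the ξ < C part is eventually small
    have h2 : Tendsto (fun N => (ℙ {ω | ξ N ω < C}).toReal) atTop (nhds 0) := by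
      have h3 := (ENNReal.tendsto_toReal (by simp : (0:ENNReal) ≠ ⊤)).comp (hξ C)
      exact h3
    filter_upwards [h2.eventually_lt_const (by linarith : (0:ℝ) < δ/2)] with N hN
    have hsub : {ω | ε < |W N ω - X N ω|} ⊆ {ω | ξ N ω < C} ∪
        {ω | ε < |W N ω - X N ω| ∧ C ≤ ξ N ω} := by
      intro ω hω
      by_cases h : C ≤ ξ N ω
      · exact Or.inr ⟨hω, h⟩
      · exact Or.inl (Nat.lt_of_not_ge h)
    calc (ℙ {ω | ε < |W N ω - X N ω|}).toReal
        ≤ (ℙ {ω | ξ N ω < C}).toReal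
          + (ℙ {ω | ε < |W N ω - X N ω| ∧ C ≤ ξ N ω}).toReal := aux_union ℙ hsub
      _ < δ/2 + δ/2 := by exact add_lt_add hN (cheb N)
      _ = δ := by ring
  -- dense set of continuity points
  have hdense : Dense {b : ℝ | ContinuousAt G b} := by
    have h1 := hGmono.countable_not_continuousAt
    have h2 := Set.Countable.dense_compl ℝ h1
    have h3 : {x | ¬ContinuousAt G x}ᶜ = {b : ℝ | ContinuousAt G b} := by
      ext b; simp
    rwa [h3] at h2
  -- Step B : conclude
  intro a hca
  rw [Metric.tendsto_atTop]
  intro η hη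
  obtain ⟨δ, hδ, hδc⟩ := Metric.continuousAt_iff.mp hca (η/3) (by linarith)
  obtain ⟨b₁, hb₁c, hb₁⟩ := hdense.exists_between (show a - δ < a by linarith)
  obtain ⟨b₂, hb₂c, hb₂⟩ := hdense.exists_between (show a < a + δ by linarith)
  have hG1 : |G b₁ - G a| < η/3 := by
    have := hδc (show dist b₁ a < δ by rw [Real.dist_eq, abs_lt]; constructor <;>
      [linarith [hb₁.1]; linarith [hb₁.2]])
    rwa [Real.dist_eq] at this
  have hG2 : |G b₂ - G a| < η/3 := by
    have := hδc (show dist b₂ a < δ by rw [Real.dist_eq, abs_lt]; constructor <;>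
      [linarith [hb₂.1]; linarith [hb₂.2]])
    rwa [Real.dist_eq] at this
  set ε₁ : ℝ := a - b₁ with hε₁def
  set ε₂ : ℝ := b₂ - a with hε₂def
  have hε₁ : 0 < ε₁ := by rw [hε₁def]; linarith [hb₁.2]
  have hε₂ : 0 < ε₂ := by rw [hε₂def]; linarith [hb₂.1]
  obtain ⟨N₁, hN₁⟩ := Metric.tendsto_atTop.mp (hWlim b₁ hb₁c) (η/3) (by linarith)
  obtain ⟨N₂, hN₂⟩ := Metric.tendsto_atTop.mp (hWlim b₂ hb₂c) (η/3) (by linarith)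
  obtain ⟨N₃, hN₃⟩ := eventually_atTop.mp (stepA ε₁ hε₁ (η/3) (by linarith))
  obtain ⟨N₄, hN₄⟩ := eventually_atTop.mp (stepA ε₂ hε₂ (η/3) (by linarith))
  refine ⟨max (max N₁ N₂) (max N₃ N₄), fun N hN => ?_⟩
  have hNN₁ : N₁ ≤ N := le_trans (le_trans (le_max_left _ _) (le_max_left _ _)) hN
  have hNN₂ : N₂ ≤ N := le_trans (le_trans (le_max_right _ _) (le_max_left _ _)) hN
  have hNN₃ : N₃ ≤ N := le_trans (le_trans (le_max_left _ _) (le_max_right _ _)) hN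
  have hNN₄ : N₄ ≤ N := le_trans (le_trans (le_max_right _ _) (le_max_right _ _)) hN
  have hw1 := hN₁ N hNN₁
  have hw2 := hN₂ N hNN₂
  have he1 := hN₃ N hNN₃
  have he2 := hN₄ N hNN₄
  rw [Real.dist_eq, abs_sub_lt_iff] at hw1 hw2
  -- inclusions
  have incl1 : {ω | X N ω ≤ a} ⊆ {ω | W N ω ≤ b₂} ∪ {ω | ε₂ < |W N ω - X N ω|} := by
    intro ω hω
    by_cases hw : W N ω ≤ b₂
    · exact Or.inl hw
    · refine Or.inr ?_
      have h1 : b₂ < W N ω := lt_of_not_ge hw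
      have h2 : ε₂ < W N ω - X N ω := by
        simp only [Set.mem_setOf_eq] at hω
        rw [hε₂def]; linarith
      exact lt_of_lt_of_le h2 (le_abs_self _)
  have incl2 : {ω | W N ω ≤ b₁} ⊆ {ω | X N ω ≤ a} ∪ {ω | ε₁ < |W N ω - X N ω|} := by
    intro ω hω
    by_cases hx : X N ω ≤ a
    · exact Or.inl hx
    · refine Or.inr ?_
      have h1 : a < X N ω := lt_of_not_ge hx
      simp only [Set.mem_setOf_eq] at hω
      have h2 : ε₁ < X N ω - W N ω := by rw [hε₁def]; linarith
      calc ε₁ < X N ω - W N ω := h2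
        _ ≤ |X N ω - W N ω| := le_abs_self _
        _ = |W N ω - X N ω| := abs_sub_comm _ _
  have hu := aux_union ℙ incl1
  have hl := aux_union ℙ incl2
  rw [Real.dist_eq, abs_sub_lt_iff]
  constructor
  · calc (ℙ {ω | X N ω ≤ a}).toReal - G a
        ≤ (ℙ {ω | W N ω ≤ b₂}).toReal + (ℙ {ω | ε₂ < |W N ω - X N ω|}).toReal - G a := by
          linarith
      _ < η := by linarith [abs_lt.mp hG2, hw2.1, hw2.2]
  · calc G a - (ℙ {ω | X N ω ≤ a}).toReal
        ≤ G a - ((ℙ {ω | W N ω ≤ b₁}).toReal - (ℙ {ω | ε₁ < |W N ω - X N ω|}).toReal) := by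
          linarith
      _ < η := by linarith [abs_lt.mp hG1, hw1.1, hw1.2]
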